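/- Let Φ be a positive concave function on the open unit simplex Δ and p ∈ Δ. Then the superdifferential of log Φ at p equals (1/Φ(p)) times the superdifferential of Φ at p, i.e. ∂(log Φ)(p) = { ξ/Φ(p) : ξ ∈ ∂Φ(p) }. -/
import Mathlib


/-- The superdifferential of a function `Ψ` on a set `S` at `p`: vectors `ξ` with
`∑ i, ξ i = 0` such that `Ψ p + ⟨ξ, q - p⟩ ≥ Ψ q` for all `q ∈ S`. -/
def superdiff {n : ℕ} (S : Set (Fin n → ℝ)) (Ψ : (Fin n → ℝ) → ℝ) (p : Fin n → ℝ) :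
    Set (Fin n → ℝ) :=
  {ξ | (∑ i, ξ i = 0) ∧ ∀ q ∈ S, Ψ p + ∑ i, ξ i * (q i - p i) ≥ Ψ q}

open Real Filter Set Topology

theorem stmt_3 (n : ℕ) (hn : 2 ≤ n) (Φ : (Fin n → ℝ) → ℝ)
    (Δ : Set (Fin n → ℝ))
    (hΔ : Δ = {p | (∀ i, 0 < p i) ∧ ∑ i, p i = 1})
    (hconc : ConcaveOn ℝ Δ Φ)
    (hpos : ∀ p ∈ Δ, 0 < Φ p)
    (p : Fin n → ℝ) (hp : p ∈ Δ) :
    superdiff Δ (fun q => Real.log (Φ q)) p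
      = (fun ξ => (Φ p)⁻¹ • ξ) '' superdiff Δ Φ p := by
  have hΦp : 0 < Φ p := hpos p hp
  ext η
  simp only [superdiff, Set.mem_setOf_eq, Set.mem_image]
  constructor
  · rintro ⟨hsum, hle⟩
    refine ⟨(Φ p) • η, ⟨?_, ?_⟩, ?_⟩
    · have h : ∑ i, (Φ p • η) i = Φ p * ∑ i, η i := by
        simp [Finset.mul_sum]
      rw [h, hsum, mul_zero]
    · intro q hq
      set c : ℝ := ∑ i, η i * (q i - p i) with hc
      have hsum' : ∑ i, (Φ p • η) i * (q i - p i) = Φ p * c := by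
        simp [hc, Finset.mul_sum, mul_assoc]
      rw [hsum']
      have key : ∀ t ∈ Set.Ioc (0:ℝ) 1,
          Φ q - Φ p ≤ Φ p * ((Real.exp (t * c) - 1) / t) := by
        intro t ht
        obtain ⟨ht0, ht1⟩ := ht
        set qt : Fin n → ℝ := (1 - t) • p + t • q with hqt
        have hqtΔ : qt ∈ Δ := by
          rw [hΔ] at hp hq ⊢
          refine ⟨fun i => ?_, ?_⟩
          · have h1 : 0 ≤ (1 - t) * p i := mul_nonneg (by linarith) (hp.1 i).le
            have h2 : 0 < t * q i := mul_pos ht0 (hq.1 i)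
            simpa [hqt] using add_pos_of_nonneg_of_pos h1 h2
          · simp only [hqt, Pi.add_apply, Pi.smul_apply, smul_eq_mul]
            rw [Finset.sum_add_distrib, ← Finset.mul_sum, ← Finset.mul_sum, hp.2, hq.2]
            ring
        have hconcav : (1 - t) * Φ p + t * Φ q ≤ Φ qt := by
          have h := hconc.2 hp hq (by linarith : (0:ℝ) ≤ 1 - t) ht0.le (by ring)
          simpa [hqt, smul_eq_mul] using h
        have hlog : Real.log (Φ qt) ≤ Real.log (Φ p) + t * c := by
          have h := hle qt hqtΔ
          have heq : ∑ i, η i * (qt i - p i) = t * c := by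
            simp only [hc, Finset.mul_sum]
            apply Finset.sum_congr rfl
            intro i _
            simp only [hqt, Pi.add_apply, Pi.smul_apply, smul_eq_mul]
            ring
          rw [heq] at h
          linarith
        have hqtpos := hpos qt hqtΔ
        have hexp : Φ qt ≤ Φ p * Real.exp (t * c) := by
          have h := Real.exp_le_exp.mpr hlog
          rwa [Real.exp_log hqtpos, Real.exp_add, Real.exp_log hΦp] at h
        rw [mul_div_assoc', le_div_iff₀ ht0]
        nlinarith
      have hderiv : HasDerivAt (fun t : ℝ => Real.exp (t * c)) c 0 := by
        have h0 : HasDerivAt (fun x : ℝ => x * c) c (0:ℝ) := hasDerivAt_mul_const c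
        simpa using h0.exp
      have h1 := hasDerivAt_iff_tendsto_slope.mp hderiv
      have h2 : Tendsto (slope (fun t : ℝ => Real.exp (t * c)) 0) (𝓝[>] 0) (𝓝 c) :=
        h1.mono_left (nhdsWithin_mono 0 (fun x hx => ne_of_gt hx))
      have hseq : slope (fun t : ℝ => Real.exp (t * c)) 0
          = fun t => (Real.exp (t * c) - 1) / t := by
        funext t
        simp [slope_def_field]
      rw [hseq] at h2
      have htend : Tendsto (fun t : ℝ => Φ p * ((Real.exp (t * c) - 1) / t))
          (𝓝[>] 0) (𝓝 (Φ p * c)) := h2.const_mul _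
      have hev : ∀ᶠ t in 𝓝[>] (0:ℝ),
          Φ q - Φ p ≤ Φ p * ((Real.exp (t * c) - 1) / t) :=
        eventually_of_mem (Ioc_mem_nhdsGT_of_mem ⟨le_refl 0, one_pos⟩) key
      have hfin : Φ q - Φ p ≤ Φ p * c := ge_of_tendsto htend hev
      linarith
    · rw [smul_smul, inv_mul_cancel₀ hΦp.ne', one_smul]
  · rintro ⟨ξ, ⟨hsum, hle⟩, rfl⟩
    refine ⟨?_, ?_⟩
    · have h : ∑ i, ((Φ p)⁻¹ • ξ) i = (Φ p)⁻¹ * ∑ i, ξ i := by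
        simp [Finset.mul_sum]
      rw [h, hsum, mul_zero]
    · intro q hq
      have hΦq := hpos q hq
      have h1 := hle q hq
      have h2 := Real.log_le_sub_one_of_pos (div_pos hΦq hΦp)
      rw [Real.log_div hΦq.ne' hΦp.ne'] at h2
      have hsum' : ∑ i, ((Φ p)⁻¹ • ξ) i * (q i - p i)
          = (Φ p)⁻¹ * ∑ i, ξ i * (q i - p i) := by
        simp [Finset.mul_sum, mul_assoc]
      rw [hsum']
      have h3 : (Φ p)⁻¹ * (Φ q - Φ p) ≤ (Φ p)⁻¹ * ∑ i, ξ i * (q i - p i) :=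
        mul_le_mul_of_nonneg_left (by linarith) (inv_nonneg.mpr hΦp.le)
      have h4 : (Φ p)⁻¹ * (Φ q - Φ p) = Φ q / Φ p - 1 := by
        field_simp
      linarith
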